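/- For all ℓ ≥ 0 and all N, M, the identity ℓ(ℓ+1) A_ℓ(N,M) = N·M·(B_ℓ(N+1,M+1) - B_ℓ(N,M)) holds. -/

import Mathlib

open Finset

/-- Rising factorial (Pochhammer symbol) `(x)_n = x(x+1)⋯(x+n-1)`. -/
noncomputable def poch (x : ℝ) (n : ℕ) : ℝ := (ascPochhammer ℝ n).eval x

/-- The LUE coefficients `A_ℓ(N,M)`. -/
noncomputable def A (N M : ℝ) : ℕ → ℝ
  | 0 => N
  | (ℓ + 1) => (1 / ((ℓ : ℝ) + 1)) * ∑ j ∈ range (ℓ + 1),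
      (-1 : ℝ) ^ j * poch (N - j) (ℓ + 1) * poch (M - j) (ℓ + 1) /
        ((j.factorial : ℝ) * ((ℓ - j).factorial : ℝ))

/-- The LUE coefficients `B_ℓ(N,M)`. -/
noncomputable def B (N M : ℝ) (ℓ : ℕ) : ℝ :=
  ∑ j ∈ range (ℓ + 1),
    (-1 : ℝ) ^ j * poch (N - j) ℓ * poch (M - j) ℓ /
      ((j.factorial : ℝ) * ((ℓ - j).factorial : ℝ))

lemma poch_succ_left (x : ℝ) (n : ℕ) : poch x (n + 1) = x * poch (x + 1) n := by
  simp [poch, ascPochhammer_succ_left, Polynomial.eval_comp]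

lemma poch_succ_right (x : ℝ) (n : ℕ) : poch x (n + 1) = poch x n * (x + n) := by
  simp [poch, ascPochhammer_succ_right]

lemma poch_diff (x : ℝ) (n : ℕ) :
    poch x (n + 2) = poch (x - 1) (n + 2) + ((n : ℝ) + 2) * poch x (n + 1) := by
  have h1 : poch x (n + 2) = poch x (n + 1) * (x + ((n : ℝ) + 1)) := by
    have := poch_succ_right x (n + 1); push_cast at this; exact this
  have h2 : poch (x - 1) (n + 2) = (x - 1) * poch x (n + 1) := by
    have := poch_succ_left (x - 1) (n + 1)
    rw [show x - 1 + 1 = x by ring] at this; exact this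
  rw [h1, h2]; ring

lemma term1 (N M D : ℝ) (n j : ℕ) :
    N * M * ((-1 : ℝ) ^ j * poch (N + 1 - j) (n + 1) * poch (M + 1 - j) (n + 1) / D
      - (-1 : ℝ) ^ j * poch (N - j) (n + 1) * poch (M - j) (n + 1) / D)
    = (-1 : ℝ) ^ j * (((n : ℝ) + 1 - j) * (poch (N - j) (n + 2) * poch (M - j) (n + 1)
        + poch (M - j) (n + 2) * poch (N - j) (n + 1)
        - ((n : ℝ) + 1 - j) * (poch (N - j) (n + 1) * poch (M - j) (n + 1)))) / D
      + (-1 : ℝ) ^ j * ((j : ℝ) * (poch (N - j) (n + 2) * poch (M + 1 - j) (n + 1)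
        + poch (M - j) (n + 2) * poch (N + 1 - j) (n + 1)
        + (j : ℝ) * (poch (N + 1 - j) (n + 1) * poch (M + 1 - j) (n + 1)))) / D := by
  have lX : poch (N - j) (n + 2) = (N - j) * poch (N + 1 - j) (n + 1) := by
    have := poch_succ_left (N - (j : ℝ)) (n + 1)
    rw [show N - (j : ℝ) + 1 = N + 1 - j by ring] at this; exact this
  have lY : poch (M - j) (n + 2) = (M - j) * poch (M + 1 - j) (n + 1) := by
    have := poch_succ_left (M - (j : ℝ)) (n + 1)
    rw [show M - (j : ℝ) + 1 = M + 1 - j by ring] at this; exact this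
  have h1 : (N - j) * poch (N + 1 - j) (n + 1)
      = poch (N - j) (n + 1) * (N - j + ((n : ℝ) + 1)) := by
    have r := poch_succ_right (N - (j : ℝ)) (n + 1)
    rw [← lX] at *; push_cast at r; linarith [r]
  have h2 : (M - j) * poch (M + 1 - j) (n + 1)
      = poch (M - j) (n + 1) * (M - j + ((n : ℝ) + 1)) := by
    have r := poch_succ_right (M - (j : ℝ)) (n + 1)
    rw [← lY] at *; push_cast at r; linarith [r]
  rw [div_sub_div_same, ← add_div, ← mul_div_assoc]
  congr 1
  rw [lX, lY]
  linear_combination ((-1 : ℝ) ^ j * ((M - j) * poch (M + 1 - j) (n + 1)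
      - ((n : ℝ) + 1 - j) * poch (M - j) (n + 1))) * h1
    + ((-1 : ℝ) ^ j * N * poch (N - j) (n + 1)) * h2


/-- The "diagonal" part of the decomposition. -/
noncomputable def alph (N M : ℝ) (n j : ℕ) : ℝ :=
  (-1 : ℝ) ^ j * (((n : ℝ) + 1 - j) * (poch (N - j) (n + 2) * poch (M - j) (n + 1)
      + poch (M - j) (n + 2) * poch (N - j) (n + 1)
      - ((n : ℝ) + 1 - j) * (poch (N - j) (n + 1) * poch (M - j) (n + 1))))
    / ((j.factorial : ℝ) * ((n + 1 - j).factorial : ℝ))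

/-- The "shifted" part of the decomposition. -/
noncomputable def delt (N M : ℝ) (n j : ℕ) : ℝ :=
  (-1 : ℝ) ^ j * ((j : ℝ) * (poch (N - j) (n + 2) * poch (M + 1 - j) (n + 1)
      + poch (M - j) (n + 2) * poch (N + 1 - j) (n + 1)
      + (j : ℝ) * (poch (N + 1 - j) (n + 1) * poch (M + 1 - j) (n + 1))))
    / ((j.factorial : ℝ) * ((n + 1 - j).factorial : ℝ))

lemma term1' (N M : ℝ) (n j : ℕ) :
    N * M * ((-1 : ℝ) ^ j * poch (N + 1 - j) (n + 1) * poch (M + 1 - j) (n + 1)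
        / ((j.factorial : ℝ) * ((n + 1 - j).factorial : ℝ))
      - (-1 : ℝ) ^ j * poch (N - j) (n + 1) * poch (M - j) (n + 1)
        / ((j.factorial : ℝ) * ((n + 1 - j).factorial : ℝ)))
    = alph N M n j + delt N M n j := by
  unfold alph delt
  exact term1 N M _ n j

lemma term2 (N M : ℝ) (n j : ℕ) (hjn : j ≤ n) :
    alph N M n j + delt N M n (j + 1)
    = ((n : ℝ) + 2) * ((-1 : ℝ) ^ j * poch (N - j) (n + 1) * poch (M - j) (n + 1) /
        ((j.factorial : ℝ) * ((n - j).factorial : ℝ))) := by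
  unfold alph delt
  have e3 : n + 1 - (j + 1) = n - j := by omega
  rw [e3]
  have e1 : (((n + 1 - j).factorial : ℕ) : ℝ) = ((n : ℝ) + 1 - j) * ((n - j).factorial : ℝ) := by
    rw [show n + 1 - j = (n - j) + 1 by omega, Nat.factorial_succ]
    push_cast [Nat.cast_sub hjn]
    ring
  have e2 : (((j + 1).factorial : ℕ) : ℝ) = ((j : ℝ) + 1) * (j.factorial : ℝ) := by
    rw [Nat.factorial_succ]; push_cast; ring
  rw [e1, e2]
  push_cast
  rw [show N + 1 - ((j : ℝ) + 1) = N - j by ring, show M + 1 - ((j : ℝ) + 1) = M - j by ring,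
    show N - ((j : ℝ) + 1) = N - (j : ℝ) - 1 by ring,
    show M - ((j : ℝ) + 1) = M - (j : ℝ) - 1 by ring,
    poch_diff (N - j) n, poch_diff (M - j) n]
  have h1 : ((j.factorial : ℕ) : ℝ) ≠ 0 := Nat.cast_ne_zero.mpr j.factorial_ne_zero
  have h2 : (((n - j).factorial : ℕ) : ℝ) ≠ 0 := Nat.cast_ne_zero.mpr (n - j).factorial_ne_zero
  have h3 : ((n : ℝ) + 1 - j) ≠ 0 := by
    have : (j : ℝ) ≤ n := by exact_mod_cast hjn
    nlinarith
  have h4 : ((j : ℝ) + 1) ≠ 0 := by positivity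
  field_simp
  ring

lemma key (N M : ℝ) (n : ℕ) :
    N * M * (B (N + 1) (M + 1) (n + 1) - B N M (n + 1))
    = ((n : ℝ) + 2) * ∑ j ∈ range (n + 1),
        (-1 : ℝ) ^ j * poch (N - j) (n + 1) * poch (M - j) (n + 1) /
          ((j.factorial : ℝ) * ((n - j).factorial : ℝ)) := by
  rw [B, B, ← Finset.sum_sub_distrib, Finset.mul_sum]
  rw [Finset.sum_congr rfl (fun j _ => term1' N M n j), Finset.sum_add_distrib]
  have hA : ∑ j ∈ range (n + 1 + 1), alph N M n j = ∑ j ∈ range (n + 1), alph N M n j := by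
    rw [Finset.sum_range_succ]
    have hz : alph N M n (n + 1) = 0 := by
      unfold alph
      rw [show ((n : ℝ) + 1 - ((n + 1 : ℕ) : ℝ)) = 0 by push_cast; ring]
      simp
    rw [hz, add_zero]
  have hD : ∑ j ∈ range (n + 1 + 1), delt N M n j = ∑ j ∈ range (n + 1), delt N M n (j + 1) := by
    rw [Finset.sum_range_succ']
    have hz : delt N M n 0 = 0 := by unfold delt; norm_num
    rw [hz, add_zero]
  rw [hA, hD, ← Finset.sum_add_distrib, Finset.mul_sum]
  exact Finset.sum_congr rfl fun j hj =>
    term2 N M n j (Nat.lt_succ_iff.mp (Finset.mem_range.mp hj))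

theorem A_vs_B (N M : ℝ) (ℓ : ℕ) :
    (ℓ : ℝ) * ((ℓ : ℝ) + 1) * A N M ℓ = N * M * (B (N + 1) (M + 1) ℓ - B N M ℓ) := by
  cases ℓ with
  | zero => simp [A, B, poch]
  | succ n =>
    rw [key N M n]
    simp only [A]
    have hn : ((n : ℝ) + 1) ≠ 0 := by positivity
    push_cast
    field_simp
    ring
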